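/- Let u be a radial function in H²_N(B) = H¹₀(B) ∩ H²(B) on the unit ball B ⊂ ℝ⁴, with the pointwise bound |u(x)| ≤ (−log|x|)^{1/2}/(2√ω₃)·‖Δu‖₂. Then for every p ≥ 1, ∫_B |x|^α |u(x)|^p dx ≤ (ε/4)^{1+p/2} Γ(1+p/2) ω₃^{1−p/2} 2^{−p} ‖Δu‖₂^p, where ε = 4/(4+α) and ω₃ = 2π². -/

import Mathlib

open MeasureTheory

noncomputable def ω₃ : ℝ := 2 * Real.pi ^ 2

/-- Weighted `Lᵖ` estimate for radial functions in `H²_N(B)` on the unit ball of `ℝ⁴`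
satisfying the pointwise bound `|u(r)| ≤ √(-log r)/(2√ω₃) · ‖Δu‖₂`; here `D = ‖Δu‖₂`
and all integrals over `B` are written in polar coordinates. -/
theorem weighted_Lp_embedding_radial (u : ℝ → ℝ) (α p D : ℝ)
    (hα : 0 < α) (hp : 1 ≤ p) (hD : 0 ≤ D)
    (hmeas : Measurable u)
    (hbound : ∀ r ∈ Set.Ioo (0:ℝ) 1,
      |u r| ≤ Real.sqrt (-Real.log r) / (2 * Real.sqrt ω₃) * D) :
    ω₃ * ∫ r in Set.Ioo (0:ℝ) 1, r ^ (α + 3) * |u r| ^ p ≤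
      (4 / (4 + α) / 4) ^ (1 + p / 2) * Real.Gamma (1 + p / 2) *
        ω₃ ^ (1 - p / 2) * 2 ^ (-p) * D ^ p := by
  have hω : (0:ℝ) < ω₃ := by unfold ω₃; positivity
  have hp0 : (0:ℝ) ≤ p := le_trans zero_le_one hp
  have ha4 : (0:ℝ) < α + 4 := by linarith
  set K : ℝ := 2 * Real.sqrt ω₃ with hK
  have hK0 : (0:ℝ) < K := by rw [hK]; positivity
  set c : ℝ := D ^ p / K ^ p with hc
  have hc0 : 0 ≤ c := by positivity
  -- the substitution r = exp (-t)
  have himg : (fun t : ℝ => Real.exp (-t)) '' Set.Ioi 0 = Set.Ioo (0:ℝ) 1 := by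
    ext r
    constructor
    · rintro ⟨t, ht, rfl⟩
      have ht' : (0:ℝ) < t := ht
      exact ⟨Real.exp_pos _, Real.exp_lt_one_iff.mpr (by linarith)⟩
    · intro hr
      refine ⟨-Real.log r, ?_, by simp [Real.exp_log hr.1]⟩
      simpa using Real.log_neg hr.1 hr.2
  have hderiv : ∀ t ∈ Set.Ioi (0:ℝ),
      HasDerivWithinAt (fun t : ℝ => Real.exp (-t)) (-Real.exp (-t)) (Set.Ioi 0) t := by
    intro t _
    have h := ((Real.hasDerivAt_exp (-t)).comp t (hasDerivAt_neg t)).hasDerivWithinAt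
      (s := Set.Ioi (0:ℝ))
    simpa [Function.comp_def, mul_neg_one] using h
  have hinj : Set.InjOn (fun t : ℝ => Real.exp (-t)) (Set.Ioi 0) := by
    intro a _ b _ h
    have := Real.exp_injective h
    linarith
  -- value of the model integral
  have hval : ∫ r in Set.Ioo (0:ℝ) 1, r ^ (α + 3) * (-Real.log r) ^ (p / 2)
      = (1 / (α + 4)) ^ (1 + p / 2) * Real.Gamma (1 + p / 2) := by
    rw [← himg, integral_image_eq_integral_abs_deriv_smul measurableSet_Ioi hderiv hinj]
    rw [← Real.integral_rpow_mul_exp_neg_mul_Ioi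
      (by positivity : (0:ℝ) < 1 + p / 2) (by linarith : (0:ℝ) < α + 4)]
    apply setIntegral_congr_fun measurableSet_Ioi
    intro t ht
    have ht0 : (0:ℝ) < t := ht
    have h1 : |(-Real.exp (-t))| = Real.exp (-t) := by
      rw [abs_neg, abs_of_pos (Real.exp_pos _)]
    have h2 : Real.exp (-t) ^ (α + 3) = Real.exp (-t * (α + 3)) := by
      rw [Real.rpow_def_of_pos (Real.exp_pos _), Real.log_exp]
    have h3 : -Real.log (Real.exp (-t)) = t := by rw [Real.log_exp]; ring
    simp only [smul_eq_mul, h1, h2, h3]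
    rw [show (1 + p / 2 - 1) = p / 2 by ring]
    have hexp : Real.exp (-t) * Real.exp (-t * (α + 3)) = Real.exp (-((α + 4) * t)) := by
      rw [← Real.exp_add, show -t + -t * (α + 3) = -((α + 4) * t) by ring]
    rw [← hexp]; ring
  -- integrability of the model integrand
  have hInt : IntegrableOn (fun r : ℝ => r ^ (α + 3) * (-Real.log r) ^ (p / 2))
      (Set.Ioo (0:ℝ) 1) := by
    rw [← himg, integrableOn_image_iff_integrableOn_abs_deriv_smul measurableSet_Ioi hderiv hinj]
    have base : IntegrableOn (fun t : ℝ => t ^ (p / 2) * Real.exp (-(α + 4) * t))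
        (Set.Ioi 0) := by
      have := integrableOn_rpow_mul_exp_neg_mul_rpow
        (by linarith : (-1:ℝ) < p / 2) (zero_lt_one' ℝ) (by linarith : (0:ℝ) < α + 4)
      simpa [Real.rpow_one] using this
    apply base.congr_fun _ measurableSet_Ioi
    intro t ht
    have ht0 : (0:ℝ) < t := ht
    have h1 : |(-Real.exp (-t))| = Real.exp (-t) := by
      rw [abs_neg, abs_of_pos (Real.exp_pos _)]
    have h2 : Real.exp (-t) ^ (α + 3) = Real.exp (-t * (α + 3)) := by
      rw [Real.rpow_def_of_pos (Real.exp_pos _), Real.log_exp]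
    have h3 : -Real.log (Real.exp (-t)) = t := by rw [Real.log_exp]; ring
    simp only [smul_eq_mul, h1, h2, h3]
    have hexp : Real.exp (-t) * Real.exp (-t * (α + 3)) = Real.exp (-(α + 4) * t) := by
      rw [← Real.exp_add, show -t + -t * (α + 3) = -(α + 4) * t by ring]
    rw [← hexp]; ring
  -- pointwise bound
  have hpt : ∀ r ∈ Set.Ioo (0:ℝ) 1,
      r ^ (α + 3) * |u r| ^ p ≤ r ^ (α + 3) * (-Real.log r) ^ (p / 2) * c := by
    intro r hr
    have hr0 : (0:ℝ) < r := hr.1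
    have hlr : (0:ℝ) ≤ -Real.log r := by
      have := Real.log_neg hr.1 hr.2; linarith
    have hb := hbound r hr
    have h1 : |u r| ^ p ≤ (Real.sqrt (-Real.log r) / K * D) ^ p :=
      Real.rpow_le_rpow (abs_nonneg _) hb hp0
    have h2 : (Real.sqrt (-Real.log r) / K * D) ^ p = (-Real.log r) ^ (p / 2) * c := by
      rw [Real.mul_rpow (by positivity) hD, Real.div_rpow (Real.sqrt_nonneg _) hK0.le,
        Real.sqrt_eq_rpow, ← Real.rpow_mul hlr, show (1 / 2 * p : ℝ) = p / 2 by ring, hc]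
      ring
    calc r ^ (α + 3) * |u r| ^ p
        ≤ r ^ (α + 3) * ((-Real.log r) ^ (p / 2) * c) := by
          apply mul_le_mul_of_nonneg_left _ (by positivity)
          rw [← h2]; exact h1
      _ = r ^ (α + 3) * (-Real.log r) ^ (p / 2) * c := by ring
  -- compare the integrals
  have hmono : (∫ r in Set.Ioo (0:ℝ) 1, r ^ (α + 3) * |u r| ^ p)
      ≤ ∫ r in Set.Ioo (0:ℝ) 1, r ^ (α + 3) * (-Real.log r) ^ (p / 2) * c := by
    apply integral_mono_of_nonneg
    · filter_upwards [ae_restrict_mem measurableSet_Ioo] with r hr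
      have : (0:ℝ) < r := hr.1
      positivity
    · exact hInt.mul_const c
    · filter_upwards [ae_restrict_mem measurableSet_Ioo] with r hr
      exact hpt r hr
  have hval2 : (∫ r in Set.Ioo (0:ℝ) 1, r ^ (α + 3) * (-Real.log r) ^ (p / 2) * c)
      = (1 / (α + 4)) ^ (1 + p / 2) * Real.Gamma (1 + p / 2) * c := by
    rw [integral_mul_const, hval]
  -- final algebra
  have hKp : K ^ p = 2 ^ p * ω₃ ^ (p / 2) := by
    rw [hK, Real.mul_rpow (by norm_num) (Real.sqrt_nonneg _), Real.sqrt_eq_rpow,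
      ← Real.rpow_mul hω.le, show (1 / 2 * p : ℝ) = p / 2 by ring]
  have hfin : ω₃ * ((1 / (α + 4)) ^ (1 + p / 2) * Real.Gamma (1 + p / 2) * c)
      = (4 / (4 + α) / 4) ^ (1 + p / 2) * Real.Gamma (1 + p / 2) *
        ω₃ ^ (1 - p / 2) * 2 ^ (-p) * D ^ p := by
    rw [show (4 / (4 + α) / 4 : ℝ) = 1 / (α + 4) by
      rw [div_div]; rw [show (4 + α) * 4 = 4 * (α + 4) by ring]
      rw [div_eq_div_iff (by positivity) (by positivity)]; ring]
    rw [show ω₃ ^ (1 - p / 2) = ω₃ * (ω₃ ^ (p / 2))⁻¹ by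
      rw [show (1 - p / 2 : ℝ) = 1 + (-(p / 2)) by ring, Real.rpow_add hω,
        Real.rpow_one, Real.rpow_neg hω.le]]
    rw [Real.rpow_neg (by norm_num : (0:ℝ) ≤ 2), hc, hKp]
    have h2p : ((2:ℝ) ^ p) ≠ 0 := by positivity
    have hωp : (ω₃ ^ (p / 2)) ≠ 0 := by positivity
    field_simp
  calc ω₃ * ∫ r in Set.Ioo (0:ℝ) 1, r ^ (α + 3) * |u r| ^ p
      ≤ ω₃ * ((1 / (α + 4)) ^ (1 + p / 2) * Real.Gamma (1 + p / 2) * c) := by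
        rw [← hval2]; exact mul_le_mul_of_nonneg_left hmono hω.le
    _ = _ := hfin
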